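/- arXiv:1912.08763 — 9 statements merged into one kernel-verified Lean document; each statement's English description precedes it below -/
import Mathlib

section
/- Let 1 ≤ l ≤ d and 1 ≤ l' ≤ d' be integers, and let q ≥ 1 and 0 ≤ r ≤ d−1 be the unique integers with d' = q·d − r. If q·l − min(l,r) ≥ l', then (l,d) dominates (l',d'): for every finite set X with a monotone total preorder ⪰ on its subsets, MMS(X,l,d) ⪰ MMS(X,l',d'). -/
open Finset

/-- A partition of the finite type `α` into `d` (possibly empty) pairwise-disjoint parts. -/
def IsPartition {α : Type} [Fintype α] [DecidableEq α] (d : ℕ) (Y : Fin d → Finset α) : Prop :=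
  (∀ i j : Fin d, i ≠ j → Disjoint (Y i) (Y j)) ∧
    Finset.univ.biUnion Y = (Finset.univ : Finset α)

/-- `MMSLe pref l d l' d'` says that the `l`-out-of-`d` maximin share of `α` is at least as good
(w.r.t. `pref`, where `pref A B` means `A ⪰ B`) as the `l'`-out-of-`d'` maximin share:
for every `d'`-partition `Y'` there is a `d`-partition `Y` whose minimal `l`-part union is
`⪰` some `l'`-part union of `Y'` (hence `⪰` the minimal one). -/
def MMSLe {α : Type} [Fintype α] [DecidableEq α]
    (pref : Finset α → Finset α → Prop) (l d l' d' : ℕ) : Prop :=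
  ∀ Y' : Fin d' → Finset α, IsPartition d' Y' →
    ∃ Y : Fin d → Finset α, IsPartition d Y ∧
      ∀ S : Finset (Fin d), S.card = l →
        ∃ S' : Finset (Fin d'), S'.card = l' ∧ pref (S.biUnion Y) (S'.biUnion Y')

/-- grouping map: sends index `j < d'` to a group index `< d`. -/
def grp (q r j : ℕ) : ℕ :=
  if j < r * (q - 1) then j / (q - 1) else r + (j - r * (q - 1)) / q

/-- start of the block of group `i`. -/
def strt (q r i : ℕ) : ℕ := if i < r then i * (q - 1) else r * (q - 1) + (i - r) * q

/-- size of the block of group `i`. -/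
def siz (q r i : ℕ) : ℕ := if i < r then q - 1 else q

lemma grp_lt {d d' q r : ℕ} (hq : 1 ≤ q) (hrd : r ≤ d)
    (key : r * (q - 1) + (d - r) * q = d') {j : ℕ} (hj : j < d') : grp q r j < d := by
  unfold grp
  split_ifs with h
  · have hq1 : 0 < q - 1 := by
      rcases Nat.eq_zero_or_pos (q - 1) with h0 | h0
      · rw [h0, Nat.mul_zero] at h; omega
      · exact h0
    have := (Nat.div_lt_iff_lt_mul hq1).mpr h
    omega
  · have h2 : j - r * (q - 1) < (d - r) * q := by omega
    have := (Nat.div_lt_iff_lt_mul (show 0 < q by omega)).mpr h2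
    omega

lemma grp_strt {q r i t : ℕ} (hq : 1 ≤ q) (ht : t < siz q r i) :
    grp q r (strt q r i + t) = i := by
  by_cases hi : i < r
  · simp only [strt, siz, if_pos hi] at ht ⊢
    have hq1 : 0 < q - 1 := by omega
    have hlt : i * (q - 1) + t < r * (q - 1) := by
      have h1 : (i + 1) * (q - 1) ≤ r * (q - 1) := Nat.mul_le_mul_right _ (by omega)
      have e : (i + 1) * (q - 1) = i * (q - 1) + (q - 1) := by ring
      omega
    rw [grp, if_pos hlt, mul_comm i (q - 1), Nat.mul_add_div hq1, Nat.div_eq_of_lt ht]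
    omega
  · simp only [strt, siz, if_neg hi] at ht ⊢
    have hge : ¬ (r * (q - 1) + (i - r) * q + t < r * (q - 1)) := by omega
    rw [grp, if_neg hge]
    have e : r * (q - 1) + (i - r) * q + t - r * (q - 1) = (i - r) * q + t := by omega
    rw [e, mul_comm (i - r) q, Nat.mul_add_div (by omega), Nat.div_eq_of_lt ht]
    omega

lemma strt_lt {d d' q r i t : ℕ} (hq : 1 ≤ q) (hid : i < d)
    (key : r * (q - 1) + (d - r) * q = d') (ht : t < siz q r i) : strt q r i + t < d' := by
  by_cases hi : i < r
  · simp only [strt, siz, if_pos hi] at ht ⊢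
    have h1 : (i + 1) * (q - 1) ≤ r * (q - 1) := Nat.mul_le_mul_right _ (by omega)
    have e : (i + 1) * (q - 1) = i * (q - 1) + (q - 1) := by ring
    omega
  · simp only [strt, siz, if_neg hi] at ht ⊢
    have h1 : (i - r + 1) * q ≤ (d - r) * q := Nat.mul_le_mul_right _ (by omega)
    have e : (i - r + 1) * q = (i - r) * q + q := by ring
    omega

theorem stmt1 {α : Type} [Fintype α] [DecidableEq α]
    (l d l' d' q r : ℕ) (hl : 1 ≤ l) (hld : l ≤ d) (hl' : 1 ≤ l') (hld' : l' ≤ d')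
    (hq : 1 ≤ q) (hr : r < d) (hqd : d' + r = q * d)
    (hcond : l' + min l r ≤ q * l)
    (pref : Finset α → Finset α → Prop)
    (hmono : ∀ A B : Finset α, B ⊆ A → pref A B)
    (htotal : ∀ A B : Finset α, pref A B ∨ pref B A)
    (htrans : ∀ A B C : Finset α, pref A B → pref B C → pref A C) :
    MMSLe pref l d l' d' := by
  intro Y' hY'
  classical
  have hrd : r ≤ d := le_of_lt hr
  have key : r * (q - 1) + (d - r) * q = d' := by
    obtain ⟨q1, rfl⟩ : ∃ q1, q = q1 + 1 := ⟨q - 1, by omega⟩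
    have e1 : (d - r) * (q1 + 1) = d * (q1 + 1) - r * (q1 + 1) := Nat.sub_mul d r (q1 + 1)
    have e2 : r * (q1 + 1) = r * q1 + r := by ring
    have e3 : d * (q1 + 1) = d * q1 + d := by ring
    have e4 : r * q1 ≤ d * q1 := Nat.mul_le_mul_right _ (by omega)
    have e5 : (q1 + 1) * d = d * q1 + d := by ring
    simp only [Nat.add_sub_cancel]
    omega
  let g : Fin d' → Fin d := fun j => ⟨grp q r j.1, grp_lt hq hrd key j.isLt⟩
  refine ⟨fun i => (univ.filter (fun j => g j = i)).biUnion Y', ⟨?_, ?_⟩, ?_⟩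
  · intro i j hij
    rw [Finset.disjoint_biUnion_left]
    intro a ha
    rw [Finset.disjoint_biUnion_right]
    intro b hb
    simp only [mem_filter] at ha hb
    apply hY'.1 a b
    intro hab
    apply hij
    rw [← ha.2, hab, hb.2]
  · apply Finset.eq_univ_of_forall
    intro a
    have : a ∈ Finset.univ.biUnion Y' := hY'.2 ▸ mem_univ a
    obtain ⟨j, _, hj⟩ := mem_biUnion.mp this
    exact mem_biUnion.mpr ⟨g j, mem_univ _,
      mem_biUnion.mpr ⟨j, mem_filter.mpr ⟨mem_univ _, rfl⟩, hj⟩⟩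
  · intro S hS
    set m := (S.filter (fun i => i.1 < r)).card with hm
    have hml : m ≤ l := by rw [hm, ← hS]; exact card_filter_le _ _
    have hmr : m ≤ r := by
      have hsub : ((S.filter (fun i => i.1 < r)).image Fin.val) ⊆ Finset.range r := by
        intro x hx
        simp only [mem_image, mem_filter] at hx
        obtain ⟨y, ⟨_, hy⟩, rfl⟩ := hx
        exact mem_range.mpr hy
      calc m = ((S.filter (fun i => i.1 < r)).image Fin.val).card :=
            (card_image_of_injective _ Fin.val_injective).symm
        _ ≤ (Finset.range r).card := card_le_card hsub
        _ = r := card_range r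
    have hfib : ∀ i : Fin d, siz q r (i : ℕ) ≤ (univ.filter (fun j => g j = i)).card := by
      intro i
      have hsub : Finset.Ico (strt q r (i : ℕ)) (strt q r (i : ℕ) + siz q r (i : ℕ)) ⊆
          (univ.filter (fun j => g j = i)).image Fin.val := by
        intro x hx
        rw [mem_Ico] at hx
        have ht : x - strt q r (i : ℕ) < siz q r (i : ℕ) := by omega
        have hx' : x < d' := by
          have h1 := strt_lt (i := (i : ℕ)) hq i.isLt key ht
          omega
        refine mem_image.mpr ⟨⟨x, hx'⟩, ?_, rfl⟩
        rw [mem_filter]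
        refine ⟨mem_univ _, ?_⟩
        apply Fin.ext
        show grp q r x = (i : ℕ)
        have h2 := grp_strt (i := (i : ℕ)) (t := x - strt q r (i : ℕ)) hq ht
        rwa [Nat.add_sub_cancel' hx.1] at h2
      calc siz q r (i : ℕ)
          = (Finset.Ico (strt q r (i : ℕ)) (strt q r (i : ℕ) + siz q r (i : ℕ))).card := by
            rw [Nat.card_Ico]; omega
        _ ≤ ((univ.filter (fun j => g j = i)).image Fin.val).card := card_le_card hsub
        _ ≤ (univ.filter (fun j => g j = i)).card := card_image_le
    have hTeq : (univ.filter (fun j => g j ∈ S)) =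
        S.biUnion (fun i => univ.filter (fun j => g j = i)) := by
      ext j
      simp only [mem_filter, mem_univ, true_and, mem_biUnion]
      constructor
      · intro h; exact ⟨g j, h, rfl⟩
      · rintro ⟨i, hi, rfl⟩; exact hi
    have hTcard : l' ≤ (univ.filter (fun j => g j ∈ S)).card := by
      rw [hTeq, card_biUnion]
      · have h1 : ∑ i ∈ S, siz q r (i : ℕ) ≤
            ∑ i ∈ S, (univ.filter (fun j => g j = i)).card :=
          Finset.sum_le_sum (fun i _ => hfib i)
        have h2 : ∑ i ∈ S, siz q r (i : ℕ) = m * (q - 1) + (l - m) * q := by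
          rw [← Finset.sum_filter_add_sum_filter_not S (fun i => i.1 < r)]
          have hc : (S.filter (fun i => ¬ i.1 < r)).card = l - m := by
            have h3 := Finset.card_filter_add_card_filter_not
              (s := S) (p := fun i : Fin d => i.1 < r)
            omega
          rw [Finset.sum_const_nat (m := q - 1) (fun i hi => by
              simp only [mem_filter] at hi; simp [siz, hi.2]),
            Finset.sum_const_nat (m := q) (fun i hi => by
              simp only [mem_filter] at hi; simp [siz, hi.2]), hc]
        have e3 : m * q = m * (q - 1) + m := by
          conv_lhs => rw [show q = (q - 1) + 1 by omega]
          ring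
        have e4 : l * q = (l - m) * q + m * q := by
          conv_lhs => rw [show l = (l - m) + m by omega]
          ring
        have e5 : q * l = l * q := by ring
        omega
      · intro x _ y _ hxy
        rw [Function.onFun, Finset.disjoint_left]
        intro j hj1 hj2
        rw [mem_filter] at hj1 hj2
        exact hxy (hj1.2 ▸ hj2.2 ▸ rfl)
    obtain ⟨S', hS'sub, hS'card⟩ := Finset.exists_subset_card_eq hTcard
    refine ⟨S', hS'card, hmono _ _ ?_⟩
    intro a ha
    rw [mem_biUnion] at ha ⊢
    obtain ⟨j, hjS', haj⟩ := ha
    have hjT := hS'sub hjS'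
    rw [mem_filter] at hjT
    exact ⟨g j, hjT.2, mem_biUnion.mpr ⟨j, mem_filter.mpr ⟨mem_univ _, rfl⟩, haj⟩⟩
end

section
/- Let 1 ≤ l ≤ d and 1 ≤ l' ≤ d' be integers, and let q ≥ 1 and 0 ≤ r ≤ d−1 be the unique integers with d' = q·d − r. If q·l − min(l,r) < l', then there exists a finite set X with a monotone total preorder ⪰ on its subsets such that MMS(X,l,d) ≺ MMS(X,l',d'). In particular, one can take X to have d' elements and order subsets by cardinality. -/
open Finset

lemma key_small (d l q r : ℕ) (hl : 1 ≤ l) (hld : l ≤ d)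
    (a : Fin d → ℕ) (htot : ∑ i, a i + r = q * d) :
    ∃ S : Finset (Fin d), S.card = l ∧ ∑ i ∈ S, a i + min l r ≤ q * l := by
  have hne : ((univ : Finset (Fin d)).powersetCard l).Nonempty := by
    rw [Finset.powersetCard_nonempty]
    simpa using hld
  obtain ⟨S, hSmem, hSmin⟩ :=
    Finset.exists_min_image _ (fun S => ∑ i ∈ S, a i) hne
  rw [Finset.mem_powersetCard] at hSmem
  obtain ⟨-, hScard⟩ := hSmem
  refine ⟨S, hScard, ?_⟩
  by_contra hcon
  push_neg at hcon
  set m := min l r with hm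
  have hml : m ≤ l := min_le_left _ _
  have hmr : m ≤ r := min_le_right _ _
  have hSne : S.Nonempty := by
    rw [← Finset.card_pos, hScard]; exact hl
  obtain ⟨i₀, hi₀S, hi₀max⟩ := Finset.exists_max_image S a hSne
  have hsum_le : ∑ i ∈ S, a i ≤ l * a i₀ := by
    calc ∑ i ∈ S, a i ≤ ∑ _i ∈ S, a i₀ := Finset.sum_le_sum (fun i hi => hi₀max i hi)
    _ = l * a i₀ := by rw [Finset.sum_const, hScard, smul_eq_mul]
  have hq_le : q ≤ a i₀ := by
    have h1 : q * l + 1 ≤ l * a i₀ + l := by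
      have : q * l + 1 ≤ ∑ i ∈ S, a i + m := hcon
      omega
    have h2 : l * q < l * (a i₀ + 1) := by nlinarith
    have := Nat.lt_of_mul_lt_mul_left h2
    omega
  have hout : ∀ j ∈ univ \ S, q ≤ a j := by
    intro j hj
    rw [Finset.mem_sdiff] at hj
    obtain ⟨-, hjS⟩ := hj
    set T := insert j (S.erase i₀) with hT
    have hjT : j ∉ S.erase i₀ := fun h => hjS (Finset.mem_of_mem_erase h)
    have hTcard : T.card = l := by
      rw [hT, Finset.card_insert_of_notMem hjT, Finset.card_erase_of_mem hi₀S, hScard]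
      omega
    have hTmem : T ∈ (univ : Finset (Fin d)).powersetCard l := by
      rw [Finset.mem_powersetCard]; exact ⟨Finset.subset_univ _, hTcard⟩
    have hmin := hSmin T hTmem
    have hTsum : ∑ i ∈ T, a i = a j + ∑ i ∈ S.erase i₀, a i := by
      rw [hT, Finset.sum_insert hjT]
    have hSsum : ∑ i ∈ S, a i = a i₀ + ∑ i ∈ S.erase i₀, a i := by
      rw [Finset.add_sum_erase _ _ hi₀S]
    omega
  have hcompl : (d - l) * q ≤ ∑ j ∈ univ \ S, a j := by
    have := Finset.card_nsmul_le_sum (univ \ S) a q hout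
    rwa [Finset.card_sdiff_of_subset (Finset.subset_univ S), Finset.card_univ,
      Fintype.card_fin, hScard, smul_eq_mul] at this
  have hsplit : ∑ i ∈ S, a i + ∑ j ∈ univ \ S, a j = ∑ i, a i := by
    rw [add_comm, Finset.sum_sdiff (Finset.subset_univ S)]
  have hqd : q * l + (d - l) * q = q * d := by
    rw [mul_comm (d - l) q, ← Nat.mul_add, Nat.add_sub_cancel' hld]
  omega

/-- `MMSLt pref l d l' d'` : the `l`-out-of-`d` MMS is strictly worse than the
`l'`-out-of-`d'` MMS: there is a `d'`-partition `Y'` such that for every `d`-partition `Y`,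
some `l`-part union of `Y` is strictly below every `l'`-part union of `Y'`. -/
def MMSLt {α : Type} [Fintype α] [DecidableEq α]
    (pref : Finset α → Finset α → Prop) (l d l' d' : ℕ) : Prop :=
  ∃ Y' : Fin d' → Finset α, IsPartition d' Y' ∧
    ∀ Y : Fin d → Finset α, IsPartition d Y →
      ∃ S : Finset (Fin d), S.card = l ∧
        ∀ S' : Finset (Fin d'), S'.card = l' →
          pref (S'.biUnion Y') (S.biUnion Y) ∧ ¬ pref (S.biUnion Y) (S'.biUnion Y')

theorem stmt2 (l d l' d' q r : ℕ) (hl : 1 ≤ l) (hld : l ≤ d) (hl' : 1 ≤ l') (hld' : l' ≤ d')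
    (hq : 1 ≤ q) (hr : r < d) (hqd : d' + r = q * d)
    (hcond : q * l < l' + min l r) :
    ∃ (α : Type) (iF : Fintype α) (iD : DecidableEq α)
      (pref : Finset α → Finset α → Prop),
      Fintype.card α = d' ∧
      (∀ A B : Finset α, B ⊆ A → pref A B) ∧
      (∀ A B : Finset α, pref A B ∨ pref B A) ∧
      (∀ A B C : Finset α, pref A B → pref B C → pref A C) ∧
      (∀ A B : Finset α, pref A B ↔ B.card ≤ A.card) ∧
      @MMSLt α iF iD pref l d l' d' := by
  refine ⟨Fin d', inferInstance, inferInstance, fun A B => B.card ≤ A.card,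
    Fintype.card_fin d', fun A B h => Finset.card_le_card h,
    fun A B => le_total _ _, fun A B C h1 h2 => le_trans h2 h1,
    fun A B => Iff.rfl, ?_⟩
  refine ⟨fun i => {i}, ⟨?_, ?_⟩, ?_⟩
  · intro i j hij
    simp [Finset.disjoint_singleton, hij, hij.symm]
  · ext x
    simp
  · intro Y hY
    -- sum of part sizes is d'
    have htot : ∑ i, (Y i).card + r = q * d := by
      have hcard : ∑ i, (Y i).card = d' := by
        rw [← Finset.card_biUnion (fun i _ j _ h => hY.1 i j h), hY.2,
          Finset.card_univ, Fintype.card_fin]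
      omega
    obtain ⟨S, hScard, hSsum⟩ := key_small d l q r hl hld _ htot
    refine ⟨S, hScard, ?_⟩
    intro S' hS'card
    have hYS : (S.biUnion Y).card = ∑ i ∈ S, (Y i).card :=
      Finset.card_biUnion (fun i _ j _ h => hY.1 i j h)
    have hYS' : (S'.biUnion fun i => {i}) = S' := by
      ext x; simp
    have hlt : (S.biUnion Y).card < l' := by
      rw [hYS]; omega
    have h : (S'.biUnion fun i => ({i} : Finset (Fin d'))).card = l' := by
      rw [hYS', hS'card]
    constructor
    · simp only [h]; exact le_of_lt hlt
    · simp only [h]; omega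
end

section
/- A pair (l,d) dominates a pair (l',d') if and only if q·l − min(l,r) ≥ l', where q ≥ 1 and 0 ≤ r ≤ d−1 are the unique integers with d' = q·d − r. -/
open Finset

/-- `(l,d)` dominates `(l',d')`: for every finite set with a monotone total preorder on
its subsets, the `l`-out-of-`d` MMS is at least as good as the `l'`-out-of-`d'` MMS. -/
def Dominates (l d l' d' : ℕ) : Prop :=
  ∀ (α : Type) (iF : Fintype α) (iD : DecidableEq α)
    (pref : Finset α → Finset α → Prop),
    (∀ A B : Finset α, B ⊆ A → pref A B) →
    (∀ A B : Finset α, pref A B ∨ pref B A) →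
    (∀ A B C : Finset α, pref A B → pref B C → pref A C) →
    @MMSLe α iF iD pref l d l' d'

lemma card_filter_lt_fin (d l : ℕ) (h : l ≤ d) :
    ((univ : Finset (Fin d)).filter (fun i => i.val < l)).card = l := by
  rw [← Finset.card_range l]
  apply Finset.card_bij (fun i _ => i.val)
  · intro a ha; simp at ha ⊢; exact ha
  · intro a _ b _ hab; exact Fin.ext hab
  · intro b hb; simp at hb; exact ⟨⟨b, lt_of_lt_of_le hb h⟩, by simp [hb], rfl⟩

/-- For a monotone `g : Fin d → ℕ` with total sum `q*d - r`, the sum of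
the first `l` values is at most `q*l - min l r`. -/
lemma sortedSumBound (d l q r : ℕ) (g : Fin d → ℕ) (hg : Monotone g)
    (hl : 1 ≤ l) (hld : l ≤ d) (hq : 1 ≤ q) (hr : r < d)
    (hsum : (∑ i, g i) + r = q * d) :
    (∑ i ∈ univ.filter (fun i : Fin d => i.val < l), g i) + min l r ≤ q * l := by
  by_contra hcon
  push_neg at hcon
  have hlpos : 0 < d := lt_of_lt_of_le hl hld
  set A := g ⟨l - 1, by omega⟩ with hA
  have hcardl := card_filter_lt_fin d l hld
  have hsmall_le : (∑ i ∈ univ.filter (fun i : Fin d => i.val < l), g i) ≤ l * A := by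
    calc (∑ i ∈ univ.filter (fun i : Fin d => i.val < l), g i)
        ≤ ∑ _i ∈ univ.filter (fun i : Fin d => i.val < l), A := by
          apply Finset.sum_le_sum
          intro i hi
          simp only [Finset.mem_filter] at hi
          exact hg (by rw [Fin.le_def]; simp; omega)
      _ = l * A := by rw [Finset.sum_const, hcardl, smul_eq_mul]
  by_cases hAq : A < q
  · have h1 : l * (A + 1) ≤ l * q := Nat.mul_le_mul_left l hAq
    have e1 : l * (A + 1) = l * A + l := by ring
    have e2 : q * l = l * q := by ring
    have hm : min l r ≤ l := min_le_left _ _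
    linarith
  · push_neg at hAq
    have hrest : ∀ i ∈ univ.filter (fun i : Fin d => ¬ i.val < l), q ≤ g i := by
      intro i hi
      simp only [Finset.mem_filter] at hi
      exact le_trans hAq (hg (by rw [Fin.le_def]; simp; omega))
    have hcardrest : (univ.filter (fun i : Fin d => ¬ i.val < l)).card = d - l := by
      have := Finset.card_filter_add_card_filter_not
        (s := (univ : Finset (Fin d))) (p := fun i : Fin d => i.val < l)
      rw [Finset.card_univ, Fintype.card_fin] at this
      omega
    have hrestsum : (d - l) * q ≤ ∑ i ∈ univ.filter (fun i : Fin d => ¬ i.val < l), g i := by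
      calc (d - l) * q = ∑ _i ∈ univ.filter (fun i : Fin d => ¬ i.val < l), q := by
            rw [Finset.sum_const, hcardrest, smul_eq_mul]
        _ ≤ _ := Finset.sum_le_sum hrest
    have hsplit : (∑ i ∈ univ.filter (fun i : Fin d => i.val < l), g i)
        + (∑ i ∈ univ.filter (fun i : Fin d => ¬ i.val < l), g i) = ∑ i, g i :=
      Finset.sum_filter_add_sum_filter_not univ _ g
    have e3 : (d - l) * q + l * q = d * q := by
      rw [← Nat.add_mul, Nat.sub_add_cancel hld]
    have e2 : q * l = l * q := by ring
    have e4 : q * d = d * q := by ring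
    have hm : min l r ≤ r := min_le_right _ _
    linarith

theorem stmt3 (l d l' d' q r : ℕ) (hl : 1 ≤ l) (hld : l ≤ d) (hl' : 1 ≤ l') (hld' : l' ≤ d')
    (hq : 1 ≤ q) (hr : r < d) (hqd : d' + r = q * d) :
    Dominates l d l' d' ↔ l' + min l r ≤ q * l := by
  have dpos : 0 < d := lt_of_lt_of_le hl hld
  have d'pos : 0 < d' := lt_of_lt_of_le hl' hld'
  constructor
  · -- forward: Dominates → inequality, via the cardinality preorder on Fin d'
    intro hdom
    have H := hdom (Fin d') inferInstance inferInstance (fun A B => B.card ≤ A.card)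
      (fun A B h => Finset.card_le_card h) (fun A B => le_total _ _)
      (fun A B C h1 h2 => le_trans h2 h1)
    have hpart : IsPartition d' (fun i : Fin d' => ({i} : Finset (Fin d'))) := by
      constructor
      · intro i j hij
        rw [Finset.disjoint_singleton]
        exact hij
      · ext x; simp
    obtain ⟨Y, ⟨hdisj, hcover⟩, hY⟩ := H _ hpart
    have htot : ∑ i, (Y i).card = d' := by
      rw [← Finset.card_biUnion (fun i _ j _ hij => hdisj i j hij), hcover,
        Finset.card_univ, Fintype.card_fin]
    set c : Fin d → ℕ := fun i => (Y i).card with hc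
    set σ := Tuple.sort c with hσ
    have hmono : Monotone (c ∘ σ) := Tuple.monotone_sort c
    set S := (univ.filter (fun i : Fin d => i.val < l)).image σ with hS
    have hScard : S.card = l := by
      rw [hS, Finset.card_image_of_injective _ σ.injective, card_filter_lt_fin d l hld]
    obtain ⟨S', hS'card, hpref⟩ := hY S hScard
    have h1 : (S'.biUnion (fun i : Fin d' => ({i} : Finset (Fin d')))) = S' := by
      ext x; simp
    rw [h1] at hpref
    have h2 : (S.biUnion Y).card = ∑ i ∈ S, c i :=
      Finset.card_biUnion (fun i _ j _ hij => hdisj i j hij)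
    have h3 : ∑ i ∈ S, c i = ∑ i ∈ univ.filter (fun i : Fin d => i.val < l), (c ∘ σ) i := by
      rw [hS, Finset.sum_image (fun x _ y _ h => σ.injective h)]
      rfl
    have hsum : (∑ i, (c ∘ σ) i) + r = q * d := by
      have e1 : ∑ i, (c ∘ ⇑σ) i = ∑ i, c i := Equiv.sum_comp σ c
      have e2 : ∑ i, c i = d' := htot
      rw [e1, e2]; exact hqd
    have hbound := sortedSumBound d l q r (c ∘ σ) hmono hl hld hq hr hsum
    have : l' ≤ (S.biUnion Y).card := hS'card ▸ hpref
    omega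
  · -- backward: inequality → Dominates
    intro hle α iF iD pref hmonoP _htotal _htrans Y' hY'
    classical
    set ψ : Fin d' → Fin d := fun j => ⟨j.val % d, Nat.mod_lt _ dpos⟩ with hψ
    set F : Fin d → Finset (Fin d') := fun i => univ.filter (fun j => ψ j = i) with hF
    set Y : Fin d → Finset α := fun i => (F i).biUnion Y' with hYdef
    have hFdisj : ∀ i ∈ (univ : Finset (Fin d)), ∀ j ∈ (univ : Finset (Fin d)),
        i ≠ j → Disjoint (F i) (F j) := by
      intro i _ j _ hij
      simp only [hF, Finset.disjoint_left, Finset.mem_filter]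
      rintro a ⟨_, rfl⟩ ⟨_, h⟩
      exact hij h
    refine ⟨Y, ⟨?_, ?_⟩, ?_⟩
    · intro i j hij
      show Disjoint ((F i).biUnion Y') ((F j).biUnion Y')
      rw [Finset.disjoint_biUnion_left]
      intro a ha
      rw [Finset.disjoint_biUnion_right]
      intro b hb
      rcases eq_or_ne a b with rfl | hab
      · exfalso
        simp only [hF, Finset.mem_filter] at ha hb
        exact hij (ha.2.symm.trans hb.2)
      · exact hY'.1 a b hab
    · apply Finset.eq_univ_iff_forall.2
      intro x
      have hx : x ∈ Finset.univ.biUnion Y' := by rw [hY'.2]; exact Finset.mem_univ x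
      obtain ⟨j, _, hxj⟩ := Finset.mem_biUnion.1 hx
      exact Finset.mem_biUnion.2 ⟨ψ j, Finset.mem_univ _,
        Finset.mem_biUnion.2 ⟨j, by simp [hF], hxj⟩⟩
    · intro S hScard
      set T := S.biUnion F with hT
      have hTcard : T.card = ∑ i ∈ S, (F i).card :=
        Finset.card_biUnion (fun i _ j _ hij => hFdisj i (Finset.mem_univ i) j (Finset.mem_univ j) hij)
      -- fiber size lower bound
      have hfib : ∀ i : Fin d, q ≤ (F i).card + (if d - r ≤ i.val then 1 else 0) := by
        intro i
        obtain ⟨q1, rfl⟩ : ∃ q1, q = q1 + 1 := ⟨q - 1, by omega⟩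
        set ind : ℕ := if d - r ≤ i.val then 1 else 0 with hind
        have hqd' : d' + r = q1 * d + d := by
          have e : (q1 + 1) * d = q1 * d + d := by ring
          linarith
        have hkey : ∀ k < q1 + 1 - ind, i.val + k * d < d' := by
          intro k hk
          rw [hind] at hk
          split at hk
          · -- ind = 1, k + 1 ≤ q1, i.val ≤ d - 1
            have h1 : (k + 1) * d ≤ q1 * d := Nat.mul_le_mul_right d (by omega)
            have h2 : (k + 1) * d = k * d + d := by ring
            have h3 := i.isLt
            linarith
          · -- ind = 0, k ≤ q1, i.val < d - r
            push_neg at *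
            have h1 : k * d ≤ q1 * d := Nat.mul_le_mul_right d (by omega)
            have h3 : i.val + r + 1 ≤ d := by omega
            linarith
        have hinj : ((Finset.range (q1 + 1 - ind)).card : ℕ) ≤ (F i).card := by
          apply Finset.card_le_card_of_injOn
            (fun k => (⟨(i.val + k * d) % d', Nat.mod_lt _ d'pos⟩ : Fin d'))
          · intro k hk
            rw [Finset.mem_coe, Finset.mem_range] at hk
            have hlt := hkey k hk
            simp only [hF, Finset.mem_coe, Finset.mem_filter, Finset.mem_univ, true_and]
            apply Fin.ext
            simp only [hψ]
            rw [Nat.mod_eq_of_lt hlt, Nat.add_mul_mod_self_right, Nat.mod_eq_of_lt i.isLt]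
          · intro a ha b hb hab
            rw [Finset.mem_coe, Finset.mem_range] at ha hb
            have h1 : (i.val + a * d) % d' = (i.val + b * d) % d' := congrArg Fin.val hab
            rw [Nat.mod_eq_of_lt (hkey a ha), Nat.mod_eq_of_lt (hkey b hb)] at h1
            have := Nat.eq_of_mul_eq_mul_right dpos (by omega : a * d = b * d)
            exact this
        rw [Finset.card_range] at hinj
        have hind1 : ind ≤ 1 := by rw [hind]; split <;> omega
        omega
      have hsumq : l * q ≤ (∑ i ∈ S, (F i).card) + ∑ i ∈ S, (if d - r ≤ i.val then 1 else 0) := by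
        rw [← Finset.sum_add_distrib]
        calc l * q = ∑ _i ∈ S, q := by rw [Finset.sum_const, hScard, smul_eq_mul]
          _ ≤ _ := Finset.sum_le_sum (fun i _ => hfib i)
      have hindsum : (∑ i ∈ S, (if d - r ≤ i.val then 1 else 0)) ≤ min l r := by
        have heq : (∑ i ∈ S, (if d - r ≤ i.val then 1 else 0))
            = (S.filter (fun i : Fin d => d - r ≤ i.val)).card := by
          simp [Finset.sum_ite, Finset.sum_const]
        rw [heq]
        apply le_min
        · exact le_trans (Finset.card_filter_le _ _) (le_of_eq hScard)
        · calc (S.filter (fun i : Fin d => d - r ≤ i.val)).card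
              ≤ (Finset.range r).card := by
                apply Finset.card_le_card_of_injOn (fun (i : Fin d) => i.val - (d - r))
                · intro i hi
                  simp only [Finset.mem_coe, Finset.mem_filter] at hi
                  rw [Finset.mem_coe, Finset.mem_range]
                  have := i.isLt
                  dsimp only
                  omega
                · intro a ha b hb hab
                  rw [Finset.mem_coe, Finset.mem_filter] at ha hb
                  apply Fin.ext
                  simp only at hab
                  omega
            _ = r := Finset.card_range r
      have hTl' : l' ≤ T.card := by
        have e : q * l = l * q := by ring
        omega
      obtain ⟨S', hS'sub, hS'card⟩ := Finset.exists_subset_card_eq hTl'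
      refine ⟨S', hS'card, hmonoP _ _ ?_⟩
      have hEq : S.biUnion Y = T.biUnion Y' := by
        rw [hT, hYdef, Finset.biUnion_biUnion]
      rw [hEq]
      exact Finset.biUnion_subset_biUnion_of_subset_left Y' hS'sub
end

section
/- Let X be a finite multiset of d' items, each of value 1, with subsets ordered by total value (equivalently, cardinality). Let d' = q·d − r with q ≥ 1 and 0 ≤ r ≤ d−1. Then the value of the l-out-of-d maximin share of X equals q·l − min(l,r), and the value of the l'-out-of-d' maximin share of X equals l'. -/
open Finset

/-- The value of the `l`-out-of-`d` maximin share w.r.t. a ℕ-valued valuation `v`: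
the maximum over `d`-partitions of the minimum value of a union of exactly `l` parts. -/
noncomputable def mmsValN {α : Type} [Fintype α] [DecidableEq α]
    (v : Finset α → ℕ) (l d : ℕ) : ℕ :=
  sSup {x | ∃ Y : Fin d → Finset α, IsPartition d Y ∧
    x = sInf {y | ∃ S : Finset (Fin d), S.card = l ∧ y = v (S.biUnion Y)}}

section Aux
variable {α : Type} [Fintype α] [DecidableEq α]

lemma sum_parts {d : ℕ} (Y : Fin d → Finset α) (hY : IsPartition d Y)
    (S : Finset (Fin d)) : (S.biUnion Y).card = ∑ i ∈ S, (Y i).card :=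
  Finset.card_biUnion (fun x _ y _ hxy => hY.1 x y hxy)

lemma total_parts {d : ℕ} (Y : Fin d → Finset α) (hY : IsPartition d Y) :
    ∑ i, (Y i).card = Fintype.card α := by
  rw [← sum_parts Y hY univ, hY.2, Finset.card_univ]

/-- Upper bound: for any partition, the min value of an `l`-part union is ≤ q*l - min l r. -/
lemma mms_ub {l d q r : ℕ} (hl : 1 ≤ l) (hld : l ≤ d) (hq : 1 ≤ q)
    (htot : Fintype.card α + r = q * d)
    (Y : Fin d → Finset α) (hY : IsPartition d Y) :
    sInf {y | ∃ S : Finset (Fin d), S.card = l ∧ y = (S.biUnion Y).card} ≤ q * l - min l r := by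
  obtain ⟨S0, -, hS0⟩ := Finset.exists_subset_card_eq
    (show l ≤ (univ : Finset (Fin d)).card by simpa using hld)
  have hne : {y | ∃ S : Finset (Fin d), S.card = l ∧ y = (S.biUnion Y).card}.Nonempty :=
    ⟨_, S0, hS0, rfl⟩
  by_contra hcon
  push_neg at hcon
  obtain ⟨S, hScard, hSval⟩ := Nat.sInf_mem hne
  set m := sInf {y | ∃ S : Finset (Fin d), S.card = l ∧ y = (S.biUnion Y).card} with hm
  rw [sum_parts Y hY S] at hSval
  have key : ∀ j ∉ S, ∀ i ∈ S, (Y i).card ≤ (Y j).card := by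
    intro j hj i hi
    have hjE : j ∉ S.erase i := fun h => hj (Finset.mem_of_mem_erase h)
    have hcard' : (insert j (S.erase i)).card = l := by
      rw [Finset.card_insert_of_notMem hjE, Finset.card_erase_of_mem hi, hScard]
      omega
    have hle : m ≤ (Y j).card + ∑ k ∈ S.erase i, (Y k).card := by
      have h := Nat.sInf_le (s := {y | ∃ S : Finset (Fin d), S.card = l ∧ y = (S.biUnion Y).card})
        ⟨insert j (S.erase i), hcard', rfl⟩
      rwa [sum_parts Y hY, Finset.sum_insert hjE] at h
    have heq : (Y i).card + ∑ k ∈ S.erase i, (Y k).card = ∑ k ∈ S, (Y k).card :=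
      Finset.add_sum_erase S (fun k => (Y k).card) hi
    omega
  have hqj : ∀ j ∉ S, q ≤ (Y j).card := by
    intro j hj
    have h1 : m ≤ l * (Y j).card := by
      calc m = ∑ i ∈ S, (Y i).card := hSval
        _ ≤ ∑ _i ∈ S, (Y j).card := Finset.sum_le_sum (fun i hi => key j hj i hi)
        _ = l * (Y j).card := by rw [Finset.sum_const, hScard, smul_eq_mul]
    by_contra hcj
    push_neg at hcj
    have h2 : l * ((Y j).card + 1) ≤ l * q := Nat.mul_le_mul_left l hcj
    rw [Nat.mul_add, Nat.mul_one] at h2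
    have h4 : l ≤ q * l := Nat.le_mul_of_pos_left l hq
    have h5 : l * q = q * l := Nat.mul_comm l q
    obtain ⟨A, hA⟩ : ∃ A, l * (Y j).card = A := ⟨_, rfl⟩
    obtain ⟨X, hX⟩ : ∃ X, q * l = X := ⟨_, rfl⟩
    rw [hA] at h1 h2
    rw [h5] at h2
    rw [hX] at h2 h4 hcon
    omega
  have hcompl : (d - l) * q ≤ ∑ j ∈ Sᶜ, (Y j).card := by
    calc (d - l) * q = ∑ _j ∈ Sᶜ, q := by
          rw [Finset.sum_const, smul_eq_mul, Finset.card_compl, hScard, Fintype.card_fin]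
      _ ≤ ∑ j ∈ Sᶜ, (Y j).card :=
          Finset.sum_le_sum (fun j hj => hqj j (by simpa using hj))
  have htotal : ∑ i ∈ S, (Y i).card + ∑ i ∈ Sᶜ, (Y i).card = Fintype.card α := by
    rw [Finset.sum_add_sum_compl]
    exact total_parts Y hY
  have hmul : (d - l) * q + l * q = d * q := by
    rw [← Nat.add_mul, Nat.sub_add_cancel hld]
  have h5 : l * q = q * l := Nat.mul_comm l q
  have h6 : d * q = q * d := Nat.mul_comm d q
  have h4 : l ≤ q * l := Nat.le_mul_of_pos_left l hq
  obtain ⟨C, hC⟩ : ∃ C, (d - l) * q = C := ⟨_, rfl⟩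
  obtain ⟨X, hX⟩ : ∃ X, q * l = X := ⟨_, rfl⟩
  obtain ⟨W, hW⟩ : ∃ W, q * d = W := ⟨_, rfl⟩
  rw [hC] at hcompl hmul
  rw [hX] at hcon h4
  rw [hW] at htot
  rw [h5, h6, hX, hW] at hmul
  omega

/-- The bucket assignment function. -/
def bucketB (q r k : ℕ) : ℕ :=
  if k < r * (q - 1) then k / (q - 1) else r + (k - r * (q - 1)) / q

lemma bucketB_lt {d q r k : ℕ} (hq : 1 ≤ q) (hrd : r ≤ d) (hk : k + r < q * d) :
    bucketB q r k < d := by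
  unfold bucketB
  split_ifs with h
  · have h' : k < (q - 1) * r := by rw [Nat.mul_comm]; exact h
    have := Nat.div_lt_of_lt_mul h'
    omega
  · have h1 : r * (q - 1) + r = r * q := by
      have : q - 1 + 1 = q := by omega
      calc r * (q - 1) + r = r * (q - 1 + 1) := by ring
        _ = r * q := by rw [this]
    have h2 : q * (d - r) + q * r = q * d := by rw [← Nat.mul_add, Nat.sub_add_cancel hrd]
    rw [Nat.mul_comm q r] at h2
    have h4 : k - r * (q - 1) < q * (d - r) := by
      obtain ⟨u, hu⟩ : ∃ u, r * (q - 1) = u := ⟨_, rfl⟩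
      obtain ⟨v, hv⟩ : ∃ v, q * (d - r) = v := ⟨_, rfl⟩
      obtain ⟨x, hx⟩ : ∃ x, r * q = x := ⟨_, rfl⟩
      obtain ⟨w, hw⟩ : ∃ w, q * d = w := ⟨_, rfl⟩
      rw [hu] at h1 h ⊢
      rw [hv] at h2 ⊢
      rw [hx] at h1 h2
      rw [hw] at h2 hk
      omega
    have h5 := Nat.div_lt_of_lt_mul h4
    omega

lemma bucketB_small {q r k i : ℕ} (hir : i < r) (h1 : i * (q - 1) ≤ k)
    (h2 : k < (i + 1) * (q - 1)) : bucketB q r k = i := by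
  unfold bucketB
  have hk : k < r * (q - 1) :=
    lt_of_lt_of_le h2 (Nat.mul_le_mul_right _ hir)
  rw [if_pos hk]
  exact Nat.div_eq_of_lt_le h1 h2

lemma bucketB_big {q r k i : ℕ} (hq : 1 ≤ q) (hri : r ≤ i)
    (h1 : r * (q - 1) + (i - r) * q ≤ k) (h2 : k < r * (q - 1) + (i - r + 1) * q) :
    bucketB q r k = i := by
  unfold bucketB
  have hk : ¬ k < r * (q - 1) := by
    have : 0 ≤ (i - r) * q := Nat.zero_le _
    omega
  rw [if_neg hk]
  have hdiv : (k - r * (q - 1)) / q = i - r := by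
    apply Nat.div_eq_of_lt_le <;> omega
  rw [hdiv]
  omega

/-- Injection lemma: if `c` consecutive items (from `off`) all satisfy `p`, the filter has ≥ c. -/
lemma card_filter_ge {n : ℕ} (hn : 0 < n) (e : α ≃ Fin n) (p : α → Prop) [DecidablePred p]
    (off c : ℕ) (hb : ∀ t, t < c → off + t < n)
    (hp : ∀ t, (ht : t < c) → p (e.symm ⟨off + t, hb t ht⟩)) :
    c ≤ (univ.filter p).card := by
  have key := Finset.card_le_card_of_injOn
    (f := fun t => e.symm ⟨(off + t) % n, Nat.mod_lt _ hn⟩)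
    (s := Finset.range c) (t := univ.filter p) ?_ ?_
  · simpa using key
  · intro t ht
    rw [Finset.mem_coe, Finset.mem_range] at ht
    have hlt := hb t ht
    have hmod : ((off + t) % n) = off + t := Nat.mod_eq_of_lt hlt
    rw [Finset.mem_coe, Finset.mem_filter]
    refine ⟨Finset.mem_univ _, ?_⟩
    show p (e.symm ⟨(off + t) % n, Nat.mod_lt _ hn⟩)
    simp only [hmod]
    exact hp t ht
  · intro t1 h1 t2 h2 heq
    simp only [Finset.coe_range, Set.mem_Iio] at h1 h2
    have hv := congrArg Fin.val (e.symm.injective heq)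
    simp only at hv
    rw [Nat.mod_eq_of_lt (hb t1 h1), Nat.mod_eq_of_lt (hb t2 h2)] at hv
    omega

/-- Existence of the balanced partition. -/
lemma mms_lb {d q r : ℕ} (hq : 1 ≤ q) (hrd : r ≤ d) (hn0 : 0 < Fintype.card α)
    (htot : Fintype.card α + r = q * d) :
    ∃ Y : Fin d → Finset α, IsPartition d Y ∧
      ∀ i : Fin d, q - 1 ≤ (Y i).card ∧ (r ≤ i.val → q ≤ (Y i).card) := by
  have e : α ≃ Fin (Fintype.card α) := Fintype.equivFin α
  set n := Fintype.card α with hn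
  refine ⟨fun i => univ.filter (fun x => bucketB q r (e x).val = i.val), ⟨?_, ?_⟩, ?_⟩
  · intro i j hij
    rw [Finset.disjoint_left]
    intro x hx1 hx2
    rw [Finset.mem_filter] at hx1 hx2
    exact hij (Fin.ext (hx1.2 ▸ hx2.2))
  · ext x
    simp only [Finset.mem_biUnion, Finset.mem_filter, Finset.mem_univ, true_and,
      iff_true]
    have hk : (e x).val + r < q * d := by
      have := (e x).isLt
      omega
    exact ⟨⟨bucketB q r (e x).val, bucketB_lt hq hrd hk⟩, rfl⟩
  · intro i
    have hrq : r * (q - 1) + r = r * q := by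
      have h : q - 1 + 1 = q := by omega
      calc r * (q - 1) + r = r * (q - 1 + 1) := by ring
        _ = r * q := by rw [h]
    have hrqd : r * q ≤ q * d := by
      rw [Nat.mul_comm r q]
      exact Nat.mul_le_mul_left q hrd
    by_cases hir : i.val < r
    · constructor
      · -- card ≥ q - 1, using offset i*(q-1)
        apply card_filter_ge hn0 e _ (i.val * (q - 1)) (q - 1)
          (hb := ?_) (hp := ?_)
        · intro t ht
          have hle : (i.val + 1) * (q - 1) ≤ r * (q - 1) := Nat.mul_le_mul_right _ hir
          have hs : (i.val + 1) * (q - 1) = i.val * (q - 1) + (q - 1) := Nat.succ_mul _ _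
          obtain ⟨u, hu⟩ : ∃ u, r * (q-1) = u := ⟨_, rfl⟩
          obtain ⟨x, hx⟩ : ∃ x, r * q = x := ⟨_, rfl⟩
          obtain ⟨w, hw⟩ : ∃ w, q * d = w := ⟨_, rfl⟩
          rw [hu] at hle hrq
          rw [hx] at hrq hrqd
          rw [hw] at hrqd htot
          omega
        · intro t ht
          simp only [Equiv.apply_symm_apply]
          apply bucketB_small hir (by omega)
          have hs : (i.val + 1) * (q - 1) = i.val * (q - 1) + (q - 1) := Nat.succ_mul _ _
          omega
      · intro h; omega
    · push_neg at hir
      have hcard : q ≤ (univ.filter (fun x => bucketB q r (e x).val = i.val)).card := by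
        apply card_filter_ge hn0 e _ (r * (q - 1) + (i.val - r) * q) q
          (hb := ?_) (hp := ?_)
        · intro t ht
          have hle : (i.val - r + 1) * q ≤ (d - r) * q := by
            apply Nat.mul_le_mul_right
            have := i.isLt
            omega
          have hs : (i.val - r + 1) * q = (i.val - r) * q + q := Nat.succ_mul _ _
          have heq : (d - r) * q + r * q = d * q := by
            rw [← Nat.add_mul, Nat.sub_add_cancel hrd]
          have hdq : d * q = q * d := Nat.mul_comm d q
          obtain ⟨u, hu⟩ : ∃ u, r * (q-1) = u := ⟨_, rfl⟩
          obtain ⟨x, hx⟩ : ∃ x, r * q = x := ⟨_, rfl⟩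
          obtain ⟨w, hw⟩ : ∃ w, q * d = w := ⟨_, rfl⟩
          obtain ⟨a, ha⟩ : ∃ a, (i.val - r) * q = a := ⟨_, rfl⟩
          obtain ⟨b, hb⟩ : ∃ b, (i.val - r + 1) * q = b := ⟨_, rfl⟩
          obtain ⟨c, hc⟩ : ∃ c, (d - r) * q = c := ⟨_, rfl⟩
          obtain ⟨f, hf⟩ : ∃ f, d * q = f := ⟨_, rfl⟩
          rw [hu] at hrq ⊢
          rw [hx] at hrq hrqd heq
          rw [hw] at hrqd htot hdq
          rw [ha] at hs ⊢
          rw [hb] at hle hs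
          rw [hc] at hle heq
          rw [hf] at heq hdq
          omega
        · intro t ht
          simp only [Equiv.apply_symm_apply]
          apply bucketB_big hq hir (by omega)
          have hs : (i.val - r + 1) * q = (i.val - r) * q + q := Nat.succ_mul _ _
          omega
      exact ⟨le_trans (by omega) hcard, fun _ => hcard⟩

/-- Lower bound on the value of any `l`-part union of the balanced partition. -/
lemma sum_ge {d q r l : ℕ} (hq : 1 ≤ q) (Y : Fin d → Finset α)
    (hY2 : ∀ i : Fin d, q - 1 ≤ (Y i).card ∧ (r ≤ i.val → q ≤ (Y i).card))
    (S : Finset (Fin d)) (hS : S.card = l) :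
    q * l - min l r ≤ ∑ i ∈ S, (Y i).card := by
  classical
  have hsplit : ∑ i ∈ S.filter (fun i => i.val < r), (Y i).card
      + ∑ i ∈ S.filter (fun i => ¬ i.val < r), (Y i).card = ∑ i ∈ S, (Y i).card :=
    Finset.sum_filter_add_sum_filter_not S _ _
  have hc : (S.filter (fun i => i.val < r)).card + (S.filter (fun i => ¬ i.val < r)).card = l := by
    rw [← hS]; exact Finset.card_filter_add_card_filter_not _
  have h1 : (q - 1) * (S.filter (fun i => i.val < r)).card
      ≤ ∑ i ∈ S.filter (fun i => i.val < r), (Y i).card := by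
    calc (q - 1) * (S.filter (fun i => i.val < r)).card
        = ∑ _i ∈ S.filter (fun i => i.val < r), (q - 1) := by
          rw [Finset.sum_const, smul_eq_mul, Nat.mul_comm]
      _ ≤ _ := Finset.sum_le_sum (fun i _ => (hY2 i).1)
  have h2 : q * (S.filter (fun i => ¬ i.val < r)).card
      ≤ ∑ i ∈ S.filter (fun i => ¬ i.val < r), (Y i).card := by
    calc q * (S.filter (fun i => ¬ i.val < r)).card
        = ∑ _i ∈ S.filter (fun i => ¬ i.val < r), q := by
          rw [Finset.sum_const, smul_eq_mul, Nat.mul_comm]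
      _ ≤ _ := Finset.sum_le_sum (fun i hi => (hY2 i).2 (by
          rw [Finset.mem_filter] at hi; omega))
  have hc1r : (S.filter (fun i => i.val < r)).card ≤ r := by
    have := Finset.card_le_card_of_injOn (f := fun i : Fin d => i.val)
      (s := S.filter (fun i => i.val < r)) (t := Finset.range r)
      (fun i hi => by rw [Finset.mem_coe, Finset.mem_filter] at hi; rw [Finset.mem_coe, Finset.mem_range]; exact hi.2)
      (fun i _ j _ h => Fin.ext h)
    simpa using this
  obtain ⟨c1, hc1⟩ : ∃ c1, (S.filter (fun i => i.val < r)).card = c1 := ⟨_, rfl⟩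
  obtain ⟨c2, hc2⟩ : ∃ c2, (S.filter (fun i => ¬ i.val < r)).card = c2 := ⟨_, rfl⟩
  rw [hc1] at h1 hc hc1r
  rw [hc2] at h2 hc
  have e1 : (q - 1) * c1 + c1 = q * c1 := by
    calc (q - 1) * c1 + c1 = (q - 1 + 1) * c1 := by ring
      _ = q * c1 := by congr 1; omega
  have e2 : q * c1 + q * c2 = q * l := by rw [← Nat.mul_add, hc]
  obtain ⟨A, hA⟩ : ∃ A, (q - 1) * c1 = A := ⟨_, rfl⟩
  obtain ⟨B, hB⟩ : ∃ B, q * c1 = B := ⟨_, rfl⟩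
  obtain ⟨C, hC⟩ : ∃ C, q * c2 = C := ⟨_, rfl⟩
  obtain ⟨D, hD⟩ : ∃ D, q * l = D := ⟨_, rfl⟩
  rw [hA] at h1 e1
  rw [hB] at e1 e2
  rw [hC] at h2 e2
  rw [hD] at e2 ⊢
  omega

end Aux

section Main
variable {α : Type} [Fintype α] [DecidableEq α]

lemma mms_eq {l d q r : ℕ} (hl : 1 ≤ l) (hld : l ≤ d) (hq : 1 ≤ q) (hrd : r ≤ d)
    (hn0 : 0 < Fintype.card α) (htot : Fintype.card α + r = q * d) :
    mmsValN (fun S : Finset α => S.card) l d = q * l - min l r := by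
  obtain ⟨Y0, hY0, hY0b⟩ := mms_lb (α := α) hq hrd hn0 htot
  have hubV : ∀ (Y : Fin d → Finset α), IsPartition d Y →
      sInf {y | ∃ S : Finset (Fin d), S.card = l ∧ y = (S.biUnion Y).card} ≤ q * l - min l r :=
    fun Y hY => mms_ub hl hld hq htot Y hY
  obtain ⟨S0, -, hS0⟩ := Finset.exists_subset_card_eq (show l ≤ (univ : Finset (Fin d)).card by simpa using hld)
  have hMin : sInf {y | ∃ S : Finset (Fin d), S.card = l ∧ y = (S.biUnion Y0).card}
      = q * l - min l r := by
    refine le_antisymm (hubV Y0 hY0) ?_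
    refine le_csInf ⟨_, S0, hS0, rfl⟩ ?_
    rintro b ⟨S, hS, rfl⟩
    rw [sum_parts Y0 hY0 S]
    exact sum_ge hq Y0 hY0b S hS
  unfold mmsValN
  have hmem : (q * l - min l r) ∈ {x | ∃ Y : Fin d → Finset α, IsPartition d Y ∧
      x = sInf {y | ∃ S : Finset (Fin d), S.card = l ∧ y = (S.biUnion Y).card}} :=
    ⟨Y0, hY0, hMin.symm⟩
  have hbdd : (q * l - min l r) ∈ upperBounds {x | ∃ Y : Fin d → Finset α, IsPartition d Y ∧
      x = sInf {y | ∃ S : Finset (Fin d), S.card = l ∧ y = (S.biUnion Y).card}} := by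
    rintro x ⟨Y, hY, rfl⟩
    exact hubV Y hY
  exact le_antisymm (csSup_le ⟨_, hmem⟩ hbdd) (le_csSup ⟨_, hbdd⟩ hmem)

end Main

theorem stmt4 {α : Type} [Fintype α] [DecidableEq α]
    (l d l' d' q r : ℕ) (hl : 1 ≤ l) (hld : l ≤ d) (hl' : 1 ≤ l') (hld' : l' ≤ d')
    (hq : 1 ≤ q) (hr : r < d) (hqd : d' + r = q * d)
    (hcard : Fintype.card α = d') :
    mmsValN (fun S : Finset α => S.card) l d = q * l - min l r ∧
    mmsValN (fun S : Finset α => S.card) l' d' = l' := by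
  have hn0 : 0 < Fintype.card α := by omega
  constructor
  · exact mms_eq hl hld hq (le_of_lt hr) hn0 (by rw [hcard]; exact hqd)
  · have h := mms_eq (α := α) (l := l') (d := d') (q := 1) (r := 0) hl' hld' le_rfl
      (Nat.zero_le _) hn0 (by simp [hcard])
    rw [h]
    omega
end

section
/- For integers 1 ≤ l ≤ d and 0 ≤ r < l, the pair (l,d) dominates (l−r, d−r): for every finite set X with a monotone total preorder on subsets, MMS(X,l,d) ⪰ MMS(X,l−r,d−r). -/
open Finset

theorem stmt7 {α : Type} [Fintype α] [DecidableEq α]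
    (l d r : ℕ) (hl : 1 ≤ l) (hld : l ≤ d) (hrl : r < l)
    (pref : Finset α → Finset α → Prop)
    (hmono : ∀ A B : Finset α, B ⊆ A → pref A B)
    (htotal : ∀ A B : Finset α, pref A B ∨ pref B A)
    (htrans : ∀ A B C : Finset α, pref A B → pref B C → pref A C) :

    MMSLe pref l d (l - r) (d - r) := by
  intro Y' hY'
  have hdr : d - r ≤ d := Nat.sub_le d r
  refine ⟨fun i => if h : (i : ℕ) < d - r then Y' ⟨i, h⟩ else ∅, ⟨?_, ?_⟩, ?_⟩
  · intro i j hij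
    by_cases hi : (i : ℕ) < d - r <;> by_cases hj : (j : ℕ) < d - r <;>
      simp [hi, hj]
    exact hY'.1 ⟨i, hi⟩ ⟨j, hj⟩ (by simpa [Fin.ext_iff] using hij)
  · apply Finset.eq_univ_of_forall
    intro x
    have hx : x ∈ Finset.univ.biUnion Y' := by rw [hY'.2]; exact Finset.mem_univ x
    rw [Finset.mem_biUnion] at hx
    obtain ⟨i', -, hxi⟩ := hx
    rw [Finset.mem_biUnion]
    refine ⟨⟨i'.1, lt_of_lt_of_le i'.2 hdr⟩, Finset.mem_univ _, ?_⟩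
    simp only [i'.2, dif_pos]
    simpa using hxi
  · intro S hS
    have hsplit := Finset.card_filter_add_card_filter_not
      (s := S) (fun i : Fin d => (i : ℕ) < d - r)
    have hneg : (S.filter (fun i : Fin d => ¬ (i : ℕ) < d - r)).card ≤ r := by
      have := Finset.card_le_card_of_injOn
        (f := fun i : Fin d => ((i : ℕ) - (d - r)))
        (s := S.filter (fun i : Fin d => ¬ (i : ℕ) < d - r))
        (t := Finset.range r)
        (fun i hi => by
          simp only [Finset.mem_coe, Finset.mem_filter] at hi
          have := i.2
          simp only [Finset.mem_coe, Finset.mem_range]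
          omega)
        (fun i hi j hj hij => by
          simp only [Finset.coe_filter, Set.mem_setOf_eq] at hi hj
          have h1 := i.2; have h2 := j.2
          exact Fin.ext (by simp only at hij; omega))
      simpa using this
    have hcard : l - r ≤ (S.filter (fun i : Fin d => (i : ℕ) < d - r)).card := by omega
    have hTS : S.filter (fun i : Fin d => (i : ℕ) < d - r) ⊆
        (Finset.univ.filter (fun j : Fin (d - r) => Fin.castLE hdr j ∈ S)).image
          (Fin.castLE hdr) := by
      intro i hi
      rw [Finset.mem_filter] at hi
      rw [Finset.mem_image]
      exact ⟨⟨i.1, hi.2⟩, by simpa using hi.1, rfl⟩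
    have hcard2 : l - r ≤
        (Finset.univ.filter (fun j : Fin (d - r) => Fin.castLE hdr j ∈ S)).card :=
      le_trans hcard (le_trans (Finset.card_le_card hTS) Finset.card_image_le)
    obtain ⟨S', hS'sub, hS'card⟩ := Finset.exists_subset_card_eq hcard2
    refine ⟨S', hS'card, hmono _ _ ?_⟩
    intro x hx
    rw [Finset.mem_biUnion] at hx
    obtain ⟨j, hjS', hxj⟩ := hx
    rw [Finset.mem_biUnion]
    have hjS : Fin.castLE hdr j ∈ S := by
      have := hS'sub hjS'
      simpa using this
    refine ⟨Fin.castLE hdr j, hjS, ?_⟩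
    have hj : ((Fin.castLE hdr j : Fin d) : ℕ) < d - r := j.2
    simp only [hj, dif_pos]
    simpa using hxj
end

section
/- For integers 1 ≤ l ≤ d and q ≥ 1, the pair (l,d) dominates (q·l, q·d): for every finite set X with a monotone total preorder on subsets, MMS(X,l,d) ⪰ MMS(X,q·l,q·d). That is, if l'/d' is a non-reduced fraction and l/d its reduced form, the l-out-of-d MMS is at least as good as the l'-out-of-d' MMS. -/
open Finset

/-- The natural quotient map `Fin (q*d) → Fin d`. -/
def quotMap (q d : ℕ) (hq : 0 < q) (k : Fin (q * d)) : Fin d :=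
  ⟨k.val / q, Nat.div_lt_of_lt_mul (by have := k.isLt; omega)⟩

lemma fiber_card (q d : ℕ) (hq : 0 < q) (i : Fin d) :
    (Finset.univ.filter (fun k : Fin (q * d) => quotMap q d hq k = i)).card = q := by
  apply Finset.card_eq_of_bijective
    (fun j hj => (⟨q * i.val + j, by
      have := i.isLt
      calc q * i.val + j < q * i.val + q := by omega
        _ = q * (i.val + 1) := by ring
        _ ≤ q * d := Nat.mul_le_mul_left _ (by omega)⟩ : Fin (q * d)))
  · intro k hk
    simp only [mem_filter, mem_univ, true_and] at hk
    have h1 : k.val / q = i.val := congrArg Fin.val hk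
    refine ⟨k.val % q, Nat.mod_lt _ hq, ?_⟩
    apply Fin.ext
    simp only
    have h2 := Nat.div_add_mod k.val q
    rw [h1] at h2
    omega
  · intro j hj
    simp only [mem_filter, mem_univ, true_and]
    apply Fin.ext
    show (q * i.val + j) / q = i.val
    rw [Nat.mul_add_div hq, Nat.div_eq_of_lt hj]
    omega
  · intro j₁ j₂ h₁ h₂ h
    have := congrArg Fin.val h
    simp only at this
    omega

theorem stmt8 {α : Type} [Fintype α] [DecidableEq α]
    (l d q : ℕ) (hl : 1 ≤ l) (hld : l ≤ d) (hq : 1 ≤ q)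
    (pref : Finset α → Finset α → Prop)
    (hmono : ∀ A B : Finset α, B ⊆ A → pref A B)
    (htotal : ∀ A B : Finset α, pref A B ∨ pref B A)
    (htrans : ∀ A B C : Finset α, pref A B → pref B C → pref A C) :
    MMSLe pref l d (q * l) (q * d) := by
  intro Y' hY'
  obtain ⟨hdisj', hcov'⟩ := hY'
  have hq0 : 0 < q := hq
  set f := quotMap q d hq0 with hf
  have key : ∀ T : Finset (Fin d),
      T.biUnion (fun i => (Finset.univ.filter (fun k => f k = i)).biUnion Y') =
        (Finset.univ.filter (fun k => f k ∈ T)).biUnion Y' := by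
    intro T
    ext a
    simp only [mem_biUnion, mem_filter, mem_univ, true_and]
    constructor
    · rintro ⟨i, hi, k, hk, ha⟩; exact ⟨k, hk ▸ hi, ha⟩
    · rintro ⟨k, hk, ha⟩; exact ⟨f k, hk, k, rfl, ha⟩
  refine ⟨fun i => (Finset.univ.filter (fun k => f k = i)).biUnion Y', ⟨?_, ?_⟩, ?_⟩
  · intro i j hij
    rw [Finset.disjoint_biUnion_left]
    intro k hk
    rw [Finset.disjoint_biUnion_right]
    intro k' hk'
    simp only [mem_filter, mem_univ, true_and] at hk hk'
    exact hdisj' k k' (by rintro rfl; exact hij (hk ▸ hk'))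
  · rw [key, Finset.filter_true_of_mem (fun k _ => mem_univ (f k)), hcov']
  · intro S hS
    refine ⟨Finset.univ.filter (fun k => f k ∈ S), ?_, ?_⟩
    · have heq : (Finset.univ.filter (fun k => f k ∈ S)) =
          S.biUnion (fun i => Finset.univ.filter (fun k => f k = i)) := by
        ext k
        simp only [mem_filter, mem_univ, true_and, mem_biUnion]
        constructor
        · intro h; exact ⟨f k, h, rfl⟩
        · rintro ⟨i, hi, rfl⟩; exact hi
      rw [heq, Finset.card_biUnion]
      · rw [Finset.sum_congr rfl (fun i _ => fiber_card q d hq0 i), Finset.sum_const, hS,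
          smul_eq_mul, mul_comm]
      · intro i _ j _ hij
        rw [Function.onFun, Finset.disjoint_filter]
        intro k _ hpi hpj
        exact hij (hpi.symm.trans hpj)
    · rw [key S]
      exact hmono _ _ (Finset.Subset.refl _)
end

section
/- For every integers h ≥ 0 and 1 ≤ l ≤ d, if |X| ≤ d, then MMS(X,l,d) ⪰ MMS(X,l+h,d+h). -/
open Finset

theorem stmt9 {α : Type} [Fintype α] [DecidableEq α]
    (l d h : ℕ) (hl : 1 ≤ l) (hld : l ≤ d) (hcard : Fintype.card α ≤ d)
    (pref : Finset α → Finset α → Prop)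
    (hmono : ∀ A B : Finset α, B ⊆ A → pref A B)
    (htotal : ∀ A B : Finset α, pref A B ∨ pref B A)
    (htrans : ∀ A B C : Finset α, pref A B → pref B C → pref A C) :
    MMSLe pref l d (l + h) (d + h) := by
  classical
  intro Y' hY'
  obtain ⟨hdisj, hcover⟩ := hY'
  -- the set of indices with nonempty parts
  set N : Finset (Fin (d + h)) := univ.filter (fun i => (Y' i).Nonempty) with hNdef
  have hNcard : N.card ≤ d := by
    have h1 : N.card ≤ ∑ i ∈ N, (Y' i).card := by
      calc N.card = ∑ i ∈ N, 1 := (Finset.card_eq_sum_ones N)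
        _ ≤ ∑ i ∈ N, (Y' i).card := by
            apply Finset.sum_le_sum
            intro i hi
            have : (Y' i).Nonempty := (Finset.mem_filter.mp hi).2
            exact Finset.card_pos.mpr this
    have h2 : ∑ i ∈ N, (Y' i).card ≤ ∑ i ∈ (univ : Finset (Fin (d+h))), (Y' i).card := by
      apply Finset.sum_le_sum_of_subset (Finset.subset_univ N)
    have h3 : ∑ i ∈ (univ : Finset (Fin (d+h))), (Y' i).card
        = (univ.biUnion Y').card := by
      exact (Finset.card_biUnion (fun i _ j _ hij => hdisj i j hij)).symm
    have h4 : (univ.biUnion Y').card = Fintype.card α := by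
      rw [hcover]; exact Finset.card_univ
    omega
  -- pick h indices with empty parts
  have hcomplcard : h ≤ Nᶜ.card := by
    have := Finset.card_compl N
    simp only [Fintype.card_fin] at this
    omega
  obtain ⟨E, hEsub, hEcard⟩ := Finset.exists_subset_card_eq hcomplcard
  have hEempty : ∀ i ∈ E, Y' i = ∅ := by
    intro i hi
    have : i ∈ Nᶜ := hEsub hi
    rw [Finset.mem_compl, hNdef, Finset.mem_filter] at this
    push_neg at this
    exact this (Finset.mem_univ i)
  have hEc : Eᶜ.card = d := by
    have := Finset.card_compl E
    simp only [Fintype.card_fin] at this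
    omega
  -- order isomorphism Fin d ≃o Eᶜ
  let e : Fin d ≃o {x // x ∈ Eᶜ} := Eᶜ.orderIsoOfFin hEc
  let f : Fin d → Fin (d + h) := fun i => (e i : Fin (d + h))
  have hfinj : Function.Injective f := by
    intro a b hab
    exact e.injective (Subtype.val_injective hab)
  have hfmem : ∀ i, f i ∈ Eᶜ := fun i => (e i).2
  refine ⟨fun i => Y' (f i), ⟨?_, ?_⟩, ?_⟩
  · intro i j hij
    exact hdisj (f i) (f j) (fun hc => hij (hfinj hc))
  · apply Finset.eq_univ_iff_forall.mpr
    intro x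
    have hx : x ∈ univ.biUnion Y' := by rw [hcover]; exact Finset.mem_univ x
    obtain ⟨j, _, hj⟩ := Finset.mem_biUnion.mp hx
    have hjc : j ∈ Eᶜ := by
      rw [Finset.mem_compl]
      intro hjE
      rw [hEempty j hjE] at hj
      exact absurd hj (Finset.notMem_empty x)
    refine Finset.mem_biUnion.mpr ⟨e.symm ⟨j, hjc⟩, Finset.mem_univ _, ?_⟩
    have : f (e.symm ⟨j, hjc⟩) = j := by
      simp [f, OrderIso.apply_symm_apply]
    rw [this]; exact hj
  · intro S hS
    refine ⟨S.image f ∪ E, ?_, ?_⟩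
    · rw [Finset.card_union_of_disjoint, Finset.card_image_of_injective _ hfinj, hS, hEcard]
      apply Finset.disjoint_left.mpr
      intro a ha haE
      obtain ⟨i, _, rfl⟩ := Finset.mem_image.mp ha
      exact (Finset.mem_compl.mp (hfmem i)) haE
    · apply hmono
      intro x hx
      obtain ⟨j, hj, hxj⟩ := Finset.mem_biUnion.mp hx
      rcases Finset.mem_union.mp hj with hj' | hj'
      · obtain ⟨i, hi, rfl⟩ := Finset.mem_image.mp hj'
        exact Finset.mem_biUnion.mpr ⟨i, hi, hxj⟩
      · rw [hEempty j hj'] at hxj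
        exact absurd hxj (Finset.notMem_empty x)
end

section
/- There exist a finite set M, an additive valuation V, and an entitlement vector t of size n = 2, such that for every i ∈ {1,2} and every pair of positive integers (l,d) with l/d ≤ tᵢ, WMMS(M,t,i) > V(MMS(M,l,d)). Concretely, take M = {a,b} with V(a)=40, V(b)=60 and t = (0.4, 0.6): then WMMS(M,t,1) = 40 > 0 and WMMS(M,t,2) = 60 > 40, while the best MMS bundle for agent 1 is ∅ and for agent 2 is the item of value 40. -/
open Finset

/-- The value of the `l`-out-of-`d` maximin share w.r.t. a real-valued valuation `v`. -/
noncomputable def mmsValR {α : Type} [Fintype α] [DecidableEq α]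
    (v : Finset α → ℝ) (l d : ℕ) : ℝ :=
  sSup {x | ∃ Y : Fin d → Finset α, IsPartition d Y ∧
    x = sInf {y | ∃ S : Finset (Fin d), S.card = l ∧ y = v (S.biUnion Y)}}

/-- The weighted maximin share of agent `i` with entitlements `t` (Farhadi et al.):
`tᵢ` times the maximum over `n`-partitions of `minⱼ V(Yⱼ)/tⱼ`. -/
noncomputable def wmms {α : Type} [Fintype α] [DecidableEq α]
    (v : α → ℝ) (n : ℕ) (t : Fin n → ℝ) (i : Fin n) : ℝ :=
  t i * sSup {x | ∃ Y : Fin n → Finset α, IsPartition n Y ∧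
    x = ⨅ j, (∑ a ∈ Y j, v a) / t j}

private lemma part_of {d : ℕ} (Y : Fin d → Finset (Fin 2)) (hY : IsPartition d Y) (a : Fin 2) :
    ∃ j, a ∈ Y j := by
  have h : a ∈ Finset.univ.biUnion Y := hY.2 ▸ Finset.mem_univ a
  simpa using h

private lemma avoid_lemma {d : ℕ} (l : ℕ) (A : Finset (Fin d)) (h : l + A.card ≤ d) :
    ∃ S : Finset (Fin d), S.card = l ∧ ∀ j ∈ S, j ∉ A := by
  have hcard : l ≤ (Finset.univ \ A).card := by
    rw [Finset.card_sdiff_of_subset (Finset.subset_univ A), Finset.card_univ, Fintype.card_fin]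
    omega
  obtain ⟨S, hSsub, hS⟩ := Finset.exists_subset_card_eq hcard
  exact ⟨S, hS, fun j hj => (Finset.mem_sdiff.mp (hSsub hj)).2⟩

private lemma ident_partition : IsPartition (α := Fin 2) 2 (fun j => {j}) := by
  constructor
  · intro i j hij
    simpa using hij
  · ext a; simp

private lemma wmms_ge (i : Fin 2) :
    (![2/5, 3/5] : Fin 2 → ℝ) i * 100 ≤ wmms (![40, 60] : Fin 2 → ℝ) 2 ![2/5, 3/5] i := by
  have hti : (0:ℝ) < ![2/5, 3/5] i := by fin_cases i <;> norm_num
  unfold wmms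
  refine mul_le_mul_of_nonneg_left ?_ hti.le
  have hbdd : BddAbove {x : ℝ | ∃ Y : Fin 2 → Finset (Fin 2), IsPartition 2 Y ∧
      x = ⨅ j, (∑ a ∈ Y j, (![40, 60] : Fin 2 → ℝ) a) / (![2/5, 3/5] : Fin 2 → ℝ) j} := by
    refine ⟨250, ?_⟩
    rintro x ⟨Y, hY, rfl⟩
    have hbb : BddBelow (Set.range fun j : Fin 2 =>
        (∑ a ∈ Y j, (![40, 60] : Fin 2 → ℝ) a) / (![2/5, 3/5] : Fin 2 → ℝ) j) := by
      refine ⟨0, ?_⟩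
      rintro y ⟨j, rfl⟩
      have h1 : (0:ℝ) ≤ ∑ a ∈ Y j, (![40, 60] : Fin 2 → ℝ) a := by
        refine Finset.sum_nonneg fun a _ => ?_
        fin_cases a <;> norm_num
      have h2 : (0:ℝ) < (![2/5, 3/5] : Fin 2 → ℝ) j := by fin_cases j <;> norm_num
      positivity
    refine le_trans (ciInf_le hbb 0) ?_
    have hsub : (∑ a ∈ Y 0, (![40, 60] : Fin 2 → ℝ) a) ≤ 100 := by
      have : (∑ a ∈ Y 0, (![40, 60] : Fin 2 → ℝ) a) ≤
          ∑ a ∈ Finset.univ, (![40, 60] : Fin 2 → ℝ) a := by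
        refine Finset.sum_le_sum_of_subset_of_nonneg (Finset.subset_univ _) fun a _ _ => ?_
        fin_cases a <;> norm_num
      simp [Fin.sum_univ_two] at this
      linarith
    have h0 : (![2/5, 3/5] : Fin 2 → ℝ) 0 = 2/5 := rfl
    rw [h0, div_le_iff₀ (by norm_num : (0:ℝ) < 2/5)]
    linarith
  refine le_csSup hbdd ?_
  refine ⟨fun j => {j}, ident_partition, ?_⟩
  have heq : (fun j : Fin 2 => (∑ a ∈ ({j} : Finset (Fin 2)), (![40, 60] : Fin 2 → ℝ) a)
      / (![2/5, 3/5] : Fin 2 → ℝ) j) = fun _ => (100:ℝ) := by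
    funext j; fin_cases j <;> norm_num
  rw [iInf, heq]
  simp

theorem stmt14 :
    ∃ (M : Type) (iF : Fintype M) (iD : DecidableEq M) (v : M → ℝ) (t : Fin 2 → ℝ),
      (∀ a, 0 ≤ v a) ∧ (∀ i, 0 < t i) ∧ (∑ i, t i = 1) ∧
      ∀ i : Fin 2, ∀ l d : ℕ, 1 ≤ l → l ≤ d → (l : ℝ) / d ≤ t i →
        @mmsValR M iF iD (fun S => ∑ a ∈ S, v a) l d < @wmms M iF iD v 2 t i := by
  refine ⟨Fin 2, inferInstance, inferInstance, ![40, 60], ![2/5, 3/5], ?_, ?_, ?_, ?_⟩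
  · intro a; fin_cases a <;> norm_num
  · intro i; fin_cases i <;> norm_num
  · simp [Fin.sum_univ_two]; norm_num
  · intro i l d hl hld hratio
    have hd0 : (0:ℝ) < d := by
      have : 0 < d := by omega
      exact_mod_cast this
    -- the bound constant C for agent i
    have key : ∀ (C : ℝ), 0 ≤ C →
        (∀ Y : Fin d → Finset (Fin 2), IsPartition d Y →
          ∃ S : Finset (Fin d), S.card = l ∧ (∑ a ∈ S.biUnion Y, (![40,60] : Fin 2 → ℝ) a) ≤ C) →
        mmsValR (fun S => ∑ a ∈ S, (![40,60] : Fin 2 → ℝ) a) l d ≤ C := by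
      intro C hC hYS
      refine Real.sSup_le ?_ hC
      rintro x ⟨Y, hY, rfl⟩
      obtain ⟨S, hScard, hSle⟩ := hYS Y hY
      have hb : BddBelow {y : ℝ | ∃ S : Finset (Fin d), S.card = l ∧
          y = ∑ a ∈ S.biUnion Y, (![40,60] : Fin 2 → ℝ) a} := by
        refine ⟨0, ?_⟩
        rintro y ⟨S', _, rfl⟩
        refine Finset.sum_nonneg fun a _ => ?_
        fin_cases a <;> norm_num
      exact le_trans (csInf_le hb ⟨S, hScard, rfl⟩) hSle
    fin_cases i
    · -- agent 0 : t = 2/5, need d ≥ l + 2, so bound 0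
      have h52 : 5 * l ≤ 2 * d := by
        have hr : (l:ℝ)/d ≤ 2/5 := by simpa using hratio
        have : (5:ℝ) * l ≤ 2 * d := by
          rw [div_le_div_iff₀ hd0 (by norm_num : (0:ℝ) < 5)] at hr
          linarith
        exact_mod_cast this
      have hd : l + 2 ≤ d := by omega
      refine lt_of_le_of_lt (key 0 le_rfl ?_) ?_
      · intro Y hY
        obtain ⟨j0, hj0⟩ := part_of Y hY 0
        obtain ⟨j1, hj1⟩ := part_of Y hY 1
        obtain ⟨S, hScard, hSav⟩ := avoid_lemma l ({j0, j1} : Finset (Fin d))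
          (le_trans (by have := Finset.card_insert_le j0 ({j1} : Finset (Fin d)); simp at this ⊢; omega) hd)
        refine ⟨S, hScard, ?_⟩
        have hempty : S.biUnion Y = ∅ := by
          rw [Finset.eq_empty_iff_forall_notMem]
          intro a ha
          obtain ⟨j, hjS, hja⟩ := Finset.mem_biUnion.mp ha
          have hne := hSav j hjS
          simp only [Finset.mem_insert, Finset.mem_singleton, not_or] at hne
          fin_cases a
          · exact Finset.disjoint_left.mp (hY.1 j j0 hne.1) hja hj0
          · exact Finset.disjoint_left.mp (hY.1 j j1 hne.2) hja hj1
        simp [hempty]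
      · calc (0:ℝ) < ![2/5, 3/5] 0 * 100 := by norm_num
          _ ≤ _ := wmms_ge 0
    · -- agent 1 : t = 3/5, need d ≥ l + 1, bound 40
      have h53 : 5 * l ≤ 3 * d := by
        have hr : (l:ℝ)/d ≤ 3/5 := by simpa using hratio
        have : (5:ℝ) * l ≤ 3 * d := by
          rw [div_le_div_iff₀ hd0 (by norm_num : (0:ℝ) < 5)] at hr
          linarith
        exact_mod_cast this
      have hd : l + 1 ≤ d := by omega
      refine lt_of_le_of_lt (key 40 (by norm_num) ?_) ?_
      · intro Y hY
        obtain ⟨j1, hj1⟩ := part_of Y hY 1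
        obtain ⟨S, hScard, hSav⟩ := avoid_lemma l ({j1} : Finset (Fin d)) (by simpa using hd)
        refine ⟨S, hScard, ?_⟩
        have hsub : S.biUnion Y ⊆ {0} := by
          intro a ha
          obtain ⟨j, hjS, hja⟩ := Finset.mem_biUnion.mp ha
          have hne : j ≠ j1 := by simpa using hSav j hjS
          fin_cases a
          · simp
          · exact absurd hj1 (Finset.disjoint_left.mp (hY.1 j j1 hne) hja)
        calc (∑ a ∈ S.biUnion Y, (![40,60] : Fin 2 → ℝ) a)
            ≤ ∑ a ∈ ({0} : Finset (Fin 2)), (![40,60] : Fin 2 → ℝ) a := by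
              refine Finset.sum_le_sum_of_subset_of_nonneg hsub fun a _ _ => ?_
              fin_cases a <;> norm_num
          _ = 40 := by norm_num
      · calc (40:ℝ) < ![2/5, 3/5] 1 * 100 := by norm_num
          _ ≤ _ := wmms_ge 1
end

section
/- There exist a finite set M, an additive valuation V, and an entitlement vector t of size n = 3, together with an index i and positive integers l,d with l/d ≤ tᵢ, such that V(MMS(M,l,d)) > WMMS(M,t,i). Concretely, take M = {a,b} with V(a)=40, V(b)=60 and t = (0.6, 0.2, 0.2): then every partition of M into 3 parts has an empty part, so WMMS(M,t,i) = 0 for all i, while with i=1, l=1, d=2, V(MMS(M,1,2)) = 40 > 0. -/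
open Finset

theorem stmt15 :
    ∃ (M : Type) (iF : Fintype M) (iD : DecidableEq M) (v : M → ℝ) (t : Fin 3 → ℝ)
      (i : Fin 3) (l d : ℕ),
      (∀ a, 0 ≤ v a) ∧ (∀ j, 0 < t j) ∧ (∑ j, t j = 1) ∧
      1 ≤ l ∧ l ≤ d ∧ (l : ℝ) / d ≤ t i ∧
      @wmms M iF iD v 3 t i < @mmsValR M iF iD (fun S => ∑ a ∈ S, v a) l d := by
  refine ⟨Fin 2, inferInstance, inferInstance, ![40, 60], ![0.6, 0.2, 0.2], 0, 1, 2,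
    ?_, ?_, ?_, le_refl 1, one_le_two, ?_, ?_⟩
  · intro a; fin_cases a <;> norm_num
  · intro j; fin_cases j <;> norm_num
  · simp [Fin.sum_univ_three]; norm_num
  · norm_num
  -- main inequality
  have hv : ∀ a : Fin 2, (0:ℝ) ≤ ![40, 60] a := by intro a; fin_cases a <;> norm_num
  have hwmms : wmms ![(40:ℝ), 60] 3 ![0.6, 0.2, 0.2] 0 = 0 := by
    unfold wmms
    have hset : {x : ℝ | ∃ Y : Fin 3 → Finset (Fin 2), IsPartition 3 Y ∧
        x = ⨅ j, (∑ a ∈ Y j, ![(40:ℝ), 60] a) / ![(0.6:ℝ), 0.2, 0.2] j} = {0} := by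
      ext x
      simp only [Set.mem_setOf_eq, Set.mem_singleton_iff]
      constructor
      · rintro ⟨Y, ⟨hdisj, hcov⟩, rfl⟩
        -- some part is empty
        have hempty : ∃ j, Y j = ∅ := by
          by_contra h
          push_neg at h
          have hcard : ∑ j, (Y j).card = 2 := by
            rw [← Finset.card_biUnion (fun i _ j _ hij => hdisj i j hij), hcov]
            simp
          have h1 : ∀ j, 1 ≤ (Y j).card := fun j =>
            Finset.card_pos.mpr (h j)
          have : (3:ℕ) ≤ 2 := by
            calc (3:ℕ) = ∑ _j : Fin 3, 1 := by simp
            _ ≤ ∑ j, (Y j).card := Finset.sum_le_sum fun j _ => h1 j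
            _ = 2 := hcard
          omega
        obtain ⟨j0, hj0⟩ := hempty
        have hnn : ∀ j, (0:ℝ) ≤ (∑ a ∈ Y j, ![(40:ℝ), 60] a) / ![(0.6:ℝ), 0.2, 0.2] j := by
          intro j
          apply div_nonneg (Finset.sum_nonneg fun a _ => hv a)
          fin_cases j <;> norm_num
        have hzero : (∑ a ∈ Y j0, ![(40:ℝ), 60] a) / ![(0.6:ℝ), 0.2, 0.2] j0 = 0 := by
          rw [hj0]; simp
        apply le_antisymm
        · calc ⨅ j, (∑ a ∈ Y j, ![(40:ℝ), 60] a) / ![(0.6:ℝ), 0.2, 0.2] j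
              ≤ (∑ a ∈ Y j0, ![(40:ℝ), 60] a) / ![(0.6:ℝ), 0.2, 0.2] j0 :=
                ciInf_le (Set.Finite.bddBelow (Set.finite_range _)) j0
          _ = 0 := hzero
        · exact le_ciInf hnn
      · rintro rfl
        refine ⟨![Finset.univ, ∅, ∅], ⟨?_, ?_⟩, ?_⟩
        · decide
        · decide
        · symm
          have hnn : ∀ j, (0:ℝ) ≤ (∑ a ∈ (![Finset.univ, ∅, ∅] : Fin 3 → Finset (Fin 2)) j,
              ![(40:ℝ), 60] a) / ![(0.6:ℝ), 0.2, 0.2] j := by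
            intro j
            apply div_nonneg (Finset.sum_nonneg fun a _ => hv a)
            fin_cases j <;> norm_num
          apply le_antisymm
          · calc (⨅ j, (∑ a ∈ (![Finset.univ, ∅, ∅] : Fin 3 → Finset (Fin 2)) j,
                ![(40:ℝ), 60] a) / ![(0.6:ℝ), 0.2, 0.2] j)
                ≤ (∑ a ∈ (![Finset.univ, ∅, ∅] : Fin 3 → Finset (Fin 2)) 1,
                ![(40:ℝ), 60] a) / ![(0.6:ℝ), 0.2, 0.2] 1 :=
                  ciInf_le (Set.Finite.bddBelow (Set.finite_range _)) 1
            _ = 0 := by simp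
          · exact le_ciInf hnn
    rw [hset]
    simp
  rw [hwmms]
  -- now show 0 < mmsValR
  unfold mmsValR
  have hY : IsPartition 2 (![{0}, {1}] : Fin 2 → Finset (Fin 2)) := by constructor <;> decide
  have hS : ∀ S : Finset (Fin 2), S.card = 1 → S = {0} ∨ S = {1} := by decide
  have hval : ∀ (Y : Fin 2 → Finset (Fin 2)) (S : Finset (Fin 2)),
      (∑ a ∈ S.biUnion Y, ![(40:ℝ), 60] a) ≤ 100 := by
    intro Y S
    calc (∑ a ∈ S.biUnion Y, ![(40:ℝ), 60] a) ≤ ∑ a : Fin 2, ![(40:ℝ), 60] a :=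
      Finset.sum_le_sum_of_subset_of_nonneg (Finset.subset_univ _) (fun a _ _ => hv a)
    _ = 100 := by simp [Fin.sum_univ_two]; norm_num
  have h40 : sInf {y : ℝ | ∃ S : Finset (Fin 2), S.card = 1 ∧
      y = ∑ a ∈ S.biUnion ![{0}, {1}], ![(40:ℝ), 60] a} = 40 := by
    have hs : {y : ℝ | ∃ S : Finset (Fin 2), S.card = 1 ∧
        y = ∑ a ∈ S.biUnion ![{0}, {1}], ![(40:ℝ), 60] a} = {40, 60} := by
      ext y
      simp only [Set.mem_setOf_eq, Set.mem_insert_iff, Set.mem_singleton_iff]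
      constructor
      · rintro ⟨S, hS1, rfl⟩
        rcases hS S hS1 with rfl | rfl
        · left; simp
        · right; simp
      · rintro (rfl | rfl)
        · exact ⟨{0}, by simp, by simp⟩
        · exact ⟨{1}, by simp, by simp⟩
    rw [hs, csInf_pair]
    norm_num [min_def]
  have hmem : (40:ℝ) ∈ {x : ℝ | ∃ Y : Fin 2 → Finset (Fin 2), IsPartition 2 Y ∧
      x = sInf {y | ∃ S : Finset (Fin 2), S.card = 1 ∧
        y = ∑ a ∈ S.biUnion Y, ![(40:ℝ), 60] a}} := ⟨![{0}, {1}], hY, h40.symm⟩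
  have hbdd : BddAbove {x : ℝ | ∃ Y : Fin 2 → Finset (Fin 2), IsPartition 2 Y ∧
      x = sInf {y | ∃ S : Finset (Fin 2), S.card = 1 ∧
        y = ∑ a ∈ S.biUnion Y, ![(40:ℝ), 60] a}} := by
    refine ⟨100, ?_⟩
    rintro x ⟨Y, hYp, rfl⟩
    calc sInf {y : ℝ | ∃ S : Finset (Fin 2), S.card = 1 ∧
          y = ∑ a ∈ S.biUnion Y, ![(40:ℝ), 60] a}
        ≤ ∑ a ∈ ({0} : Finset (Fin 2)).biUnion Y, ![(40:ℝ), 60] a := by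
          apply csInf_le
          · refine ⟨0, ?_⟩
            rintro y ⟨S, _, rfl⟩
            exact Finset.sum_nonneg fun a _ => hv a
          · exact ⟨{0}, by simp, rfl⟩
    _ ≤ 100 := hval Y {0}
  calc (0:ℝ) < 40 := by norm_num
  _ ≤ _ := le_csSup hbdd hmem
end
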